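/- arXiv:1401.0190 — 2 statements merged into one kernel-verified Lean document; each statement's English description precedes it below -/
import Mathlib

section
/- If the Rankine-Hugoniot conditions f(s_R,c_R) - f(s_L,c_L) = σ(s_R - s_L) and c_R f(s_R,c_R) - c_L f(s_L,c_L) = σ(s_R c_R + a(c_R) - s_L c_L - a(c_L)) hold with c_L ≠ c_R, then σ = f(s_L,c_L)/(s_L + ā) = f(s_R,c_R)/(s_R + ā), where ā = (a(c_R) - a(c_L))/(c_R - c_L). -/
theorem stmt0 (f : ℝ → ℝ → ℝ) (a : ℝ → ℝ) (sL sR cL cR σ : ℝ)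
    (hc : cL ≠ cR)
    (abar : ℝ) (habar : abar = (a cR - a cL) / (cR - cL))
    (hL : sL + abar ≠ 0) (hR : sR + abar ≠ 0)
    (hRH1 : f sR cR - f sL cL = σ * (sR - sL))
    (hRH2 : cR * f sR cR - cL * f sL cL
      = σ * (sR * cR + a cR - sL * cL - a cL)) :
    σ = f sL cL / (sL + abar) ∧ σ = f sR cR / (sR + abar) := by
  have hd : cR - cL ≠ 0 := sub_ne_zero.mpr (Ne.symm hc)
  have hA : a cR - a cL = abar * (cR - cL) := by
    rw [habar]; field_simp
  have hRkey : f sR cR * (cR - cL) = σ * (sR + abar) * (cR - cL) := by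
    linear_combination hRH2 - cL * hRH1 + σ * hA
  have hLkey : f sL cL * (cR - cL) = σ * (sL + abar) * (cR - cL) := by
    linear_combination hRH2 - cR * hRH1 + σ * hA
  have hR' : f sR cR = σ * (sR + abar) := mul_right_cancel₀ hd hRkey
  have hL' : f sL cL = σ * (sL + abar) := mul_right_cancel₀ hd hLkey
  constructor
  · rw [hL']; field_simp
  · rw [hR']; field_simp
end

section
/- Let g : [0,1] → ℝ be continuous, strictly concave, positive on (0,1) with g(0) = g(1) = 0, and let α > 0. Then s ↦ g(s)/(s + α) attains its maximum on [0,1] at the unique tangency point s* where g'(s*) = g(s*)/(s* + α), and g(s)/(s+α) is strictly increasing on [0, s*] and strictly decreasing on [s*, 1]. -/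
theorem stmt13 (g g' : ℝ → ℝ) (α : ℝ) (hα : 0 < α)
    (hcont : ContinuousOn g (Set.Icc 0 1))
    (hderiv : ∀ s ∈ Set.Ioo (0:ℝ) 1, HasDerivAt g (g' s) s)
    (hconc : StrictConcaveOn ℝ (Set.Icc 0 1) g)
    (h0 : g 0 = 0) (h1 : g 1 = 0)
    (hpos : ∀ s ∈ Set.Ioo (0:ℝ) 1, 0 < g s) :
    ∃ sstar : ℝ, sstar ∈ Set.Ioo (0:ℝ) 1 ∧
      g' sstar = g sstar / (sstar + α) ∧
      (∀ s ∈ Set.Ioo (0:ℝ) 1, g' s = g s / (s + α) → s = sstar) ∧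
      IsMaxOn (fun s => g s / (s + α)) (Set.Icc 0 1) sstar ∧
      StrictMonoOn (fun s => g s / (s + α)) (Set.Icc 0 sstar) ∧
      StrictAntiOn (fun s => g s / (s + α)) (Set.Icc sstar 1) := by
  set h : ℝ → ℝ := fun s => g s / (s + α) with hh
  have hden : ∀ s : ℝ, s ∈ Set.Icc (0:ℝ) 1 → 0 < s + α := fun s hs => by
    have := hs.1; linarith
  have hconth : ContinuousOn h (Set.Icc 0 1) := by
    apply hcont.div (Continuous.continuousOn (by continuity))
    intro s hs; exact ne_of_gt (hden s hs)
  -- existence of a max point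
  obtain ⟨c, hcmem, hmax⟩ :=
    isCompact_Icc.exists_isMaxOn (⟨0, by norm_num, by norm_num⟩ : (Set.Icc (0:ℝ) 1).Nonempty)
      hconth
  have hhalf : 0 < h (1/2) := by
    have hm : (1/2 : ℝ) ∈ Set.Ioo (0:ℝ) 1 := by norm_num
    exact div_pos (hpos _ hm) (by norm_num; linarith)
  have hhc : 0 < h c := lt_of_lt_of_le hhalf (hmax (by norm_num))
  have hc0 : c ≠ 0 := by
    intro e; rw [e] at hhc; simp only [hh, h0, zero_div] at hhc; exact lt_irrefl 0 hhc
  have hc1 : c ≠ 1 := by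
    intro e; rw [e] at hhc; simp only [hh, h1, zero_div] at hhc; exact lt_irrefl 0 hhc
  have hcIoo : c ∈ Set.Ioo (0:ℝ) 1 :=
    ⟨lt_of_le_of_ne hcmem.1 (Ne.symm hc0), lt_of_le_of_ne hcmem.2 hc1⟩
  -- derivative of h
  have hDh : ∀ s ∈ Set.Ioo (0:ℝ) 1,
      HasDerivAt h ((g' s * (s + α) - g s * 1) / (s + α) ^ 2) s := by
    intro s hs
    exact (hderiv s hs).div (((hasDerivAt_id s).add_const α))
      (ne_of_gt (hden s ⟨hs.1.le, hs.2.le⟩))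
  have hcα : (0:ℝ) < c + α := hden c hcmem
  -- tangency equation at c
  have hc' : HasDerivAt h ((g' c * (c + α) - g c * 1) / (c + α) ^ 2) c := hDh c hcIoo
  have hloc : IsLocalMax h c := hmax.isLocalMax (Icc_mem_nhds hcIoo.1 hcIoo.2)
  have hzero : (g' c * (c + α) - g c * 1) / (c + α) ^ 2 = 0 := hloc.hasDerivAt_eq_zero hc'
  have hnum : g' c * (c + α) = g c := by
    have h2 : (c + α) ^ 2 ≠ 0 := by positivity
    field_simp at hzero; linarith
  have htan : g' c = g c / (c + α) := by
    field_simp; linarith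
  -- sign of the numerator of h' away from c
  have hsign : ∀ s ∈ Set.Ioo (0:ℝ) 1,
      (s < c → 0 < g' s * (s + α) - g s) ∧ (c < s → g' s * (s + α) - g s < 0) := by
    intro s hs
    have hsIcc : s ∈ Set.Icc (0:ℝ) 1 := ⟨hs.1.le, hs.2.le⟩
    have hsα : (0:ℝ) < s + α := hden s hsIcc
    have hm : g s * (c + α) ≤ g c * (s + α) := by
      have hle := hmax hsIcc
      simp only [hh] at hle
      exact (div_le_div_iff₀ hsα hcα).1 hle
    constructor
    · intro hlt
      have hsl := hconc.slope_lt_of_hasDerivAt hsIcc hcmem hlt (hderiv s hs)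
      rw [slope_def_field] at hsl
      have hA := (div_lt_iff₀ (show (0:ℝ) < c - s by linarith)).1 hsl
      nlinarith [mul_pos (show (0:ℝ) < c - s by linarith) hsα]
    · intro hlt
      have hsl := hconc.lt_slope_of_hasDerivAt hcmem hsIcc hlt (hderiv s hs)
      rw [slope_def_field] at hsl
      have hA := (lt_div_iff₀ (show (0:ℝ) < s - c by linarith)).1 hsl
      nlinarith [mul_pos (show (0:ℝ) < s - c by linarith) hsα]
  refine ⟨c, hcIoo, htan, ?_, hmax, ?_, ?_⟩
  · -- uniqueness
    intro s hs heq
    have hsα : (0:ℝ) < s + α := hden s ⟨hs.1.le, hs.2.le⟩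
    have hse : g' s * (s + α) - g s = 0 := by
      rw [heq]; field_simp; ring
    rcases lt_trichotomy s c with hlt | he | hgt
    · have := (hsign s hs).1 hlt; linarith
    · exact he
    · have := (hsign s hs).2 hgt; linarith
  · -- strict mono on [0, c]
    apply strictMonoOn_of_deriv_pos (convex_Icc 0 c)
      (hconth.mono (Set.Icc_subset_Icc le_rfl hcmem.2))
    intro x hx
    rw [interior_Icc] at hx
    have hxIoo : x ∈ Set.Ioo (0:ℝ) 1 := ⟨hx.1, lt_of_lt_of_le hx.2 hcmem.2⟩
    rw [(hDh x hxIoo).deriv]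
    have := (hsign x hxIoo).1 hx.2
    exact div_pos (by linarith) (pow_pos (hden x ⟨hxIoo.1.le, hxIoo.2.le⟩) 2)
  · -- strict anti on [c, 1]
    apply strictAntiOn_of_deriv_neg (convex_Icc c 1)
      (hconth.mono (Set.Icc_subset_Icc hcmem.1 le_rfl))
    intro x hx
    rw [interior_Icc] at hx
    have hxIoo : x ∈ Set.Ioo (0:ℝ) 1 := ⟨lt_of_le_of_lt hcmem.1 hx.1, hx.2⟩
    rw [(hDh x hxIoo).deriv]
    have := (hsign x hxIoo).2 hx.1
    exact div_neg_of_neg_of_pos (by linarith) (pow_pos (hden x ⟨hxIoo.1.le, hxIoo.2.le⟩) 2)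
end
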